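/- Critical points of the Schwarzschild 3-body potential at non-collinear configurations: Let q₀ = (q₁₀, q₂₀, q₃₀) ∈ Ω be such that the three points q₁₀, q₂₀, q₃₀ ∈ ℝ² are not collinear. Then ∇U(q₀) = 0 if and only if r₁₂(q₀) = √(−3B₁₂/A₁₂), r₁₃(q₀) = √(−3B₁₃/A₁₃) and r₂₃(q₀) = √(−3B₂₃/A₂₃). -/

import Mathlib

/-- Configuration space of three point particles in the plane. -/
noncomputable abbrev SchwConf := PiLp 2 fun _ : Fin 3 => EuclideanSpace ℝ (Fin 2)

/-- The Schwarzschild 3-body potential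
`U(q) = Σ_{1 ≤ i < j ≤ 3} (A_ij/r_ij(q) + B_ij/r_ij(q)³)`, where `r_ij(q) = ‖q_i − q_j‖`. -/
noncomputable def schwU3 (A12 B12 A13 B13 A23 B23 : ℝ) (q : SchwConf) : ℝ :=
  (A12 / ‖q 0 - q 1‖ + B12 / ‖q 0 - q 1‖ ^ 3) +
  (A13 / ‖q 0 - q 2‖ + B13 / ‖q 0 - q 2‖ ^ 3) +
  (A23 / ‖q 1 - q 2‖ + B23 / ‖q 1 - q 2‖ ^ 3)

open Real

-- derivative of s ↦ A/√s + B/√s³ at s = r²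
lemma psi_hasDerivAt (A B r : ℝ) (hr : 0 < r) :
    HasDerivAt (fun s : ℝ => A / Real.sqrt s + B / Real.sqrt s ^ 3)
      ((-A / r ^ 3 - 3 * B / r ^ 5) / 2) (r ^ 2) := by
  have hrs : Real.sqrt (r ^ 2) = r := by
    rw [Real.sqrt_sq hr.le]
  have hsq : HasDerivAt Real.sqrt (1 / (2 * r)) (r ^ 2) := by
    have := Real.hasDerivAt_sqrt (x := r ^ 2) (by positivity)
    rwa [hrs] at this
  have h1 : HasDerivAt (fun s : ℝ => A / Real.sqrt s)
      ((0 * Real.sqrt (r^2) - A * (1/(2*r))) / (Real.sqrt (r^2)) ^ 2) (r ^ 2) :=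
    (hasDerivAt_const _ A).div hsq (by rw [hrs]; exact hr.ne')
  have h2 : HasDerivAt (fun s : ℝ => Real.sqrt s ^ 3)
      (3 * Real.sqrt (r^2) ^ 2 * (1/(2*r))) (r ^ 2) := by
    simpa using hsq.fun_pow 3
  have h3 : HasDerivAt (fun s : ℝ => B / Real.sqrt s ^ 3)
      ((0 * Real.sqrt (r^2) ^ 3 - B * (3 * Real.sqrt (r^2) ^ 2 * (1/(2*r)))) /
        (Real.sqrt (r^2) ^ 3) ^ 2) (r ^ 2) :=
    (hasDerivAt_const _ B).div h2 (by rw [hrs]; positivity)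
  have := h1.fun_add h3
  refine this.congr_deriv ?_
  rw [hrs]
  field_simp
  ring

noncomputable abbrev E2 := EuclideanSpace ℝ (Fin 2)

noncomputable def Lpair (i j : Fin 3) : SchwConf →L[ℝ] E2 :=
  (PiLp.proj (𝕜 := ℝ) 2 (fun _ : Fin 3 => E2) i) - (PiLp.proj (𝕜 := ℝ) 2 (fun _ : Fin 3 => E2) j)

lemma Lpair_apply (i j : Fin 3) (q : SchwConf) : Lpair i j q = q i - q j := by
  simp [Lpair]

lemma pair_hasFDerivAt (A B : ℝ) (i j : Fin 3) (q₀ : SchwConf) (hne : q₀ i ≠ q₀ j) :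
    HasFDerivAt (fun q : SchwConf => A / ‖q i - q j‖ + B / ‖q i - q j‖ ^ 3)
      ((-A / ‖q₀ i - q₀ j‖ ^ 3 - 3 * B / ‖q₀ i - q₀ j‖ ^ 5) •
        ((innerSL ℝ (q₀ i - q₀ j)).comp (Lpair i j))) q₀ := by
  set u : E2 := q₀ i - q₀ j with hu
  have hr : 0 < ‖u‖ := norm_pos_iff.2 (sub_ne_zero.2 hne)
  have hL : HasFDerivAt (fun q : SchwConf => q i - q j) (Lpair i j) q₀ := by
    rw [← funext (Lpair_apply i j)]; exact (Lpair i j).hasFDerivAt (x := q₀)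
  have hg : HasFDerivAt (fun q : SchwConf => ‖q i - q j‖ ^ 2)
      ((2 • (innerSL ℝ u)).comp (Lpair i j)) q₀ :=
    by have := ((hasStrictFDerivAt_norm_sq u).hasFDerivAt).comp q₀ hL; exact this
  have hpsi := psi_hasDerivAt A B ‖u‖ hr
  have hcomp := hpsi.comp_hasFDerivAt q₀ hg
  have heq : (fun q : SchwConf => A / ‖q i - q j‖ + B / ‖q i - q j‖ ^ 3) =
      (fun s : ℝ => A / Real.sqrt s + B / Real.sqrt s ^ 3) ∘
        (fun q : SchwConf => ‖q i - q j‖ ^ 2) := by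
    funext q
    simp [Function.comp, Real.sqrt_sq (norm_nonneg _)]
  rw [heq]
  refine hcomp.congr_fderiv ?_
  ext h
  simp [ContinuousLinearMap.smul_apply, ContinuousLinearMap.comp_apply, smul_smul]
  ring

lemma crit_dist {A B r : ℝ} (hA : A < 0) (hB : 0 < B) (hr : 0 < r) :
    -A / r ^ 3 - 3 * B / r ^ 5 = 0 ↔ r = Real.sqrt (-3 * B / A) := by
  have hr' : r ≠ 0 := hr.ne'
  have hA' : A ≠ 0 := hA.ne
  constructor
  · intro h
    have h2 : r ^ 2 = -3 * B / A := by
      field_simp at h ⊢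
      nlinarith [pow_pos hr 3, pow_pos hr 5]
    rw [← h2, Real.sqrt_sq hr.le]
  · intro h
    have hpos : 0 < -3 * B / A := div_pos_of_neg_of_neg (by linarith) hA
    have h2 : r ^ 2 = -3 * B / A := by
      rw [h, Real.sq_sqrt hpos.le]
    have hAr : -A * r ^ 2 = 3 * B := by
      rw [h2]; field_simp
    field_simp
    nlinarith [pow_pos hr 3, pow_pos hr 5]
/-- **Critical points of the Schwarzschild 3-body potential at non-collinear configurations.**
If the three points of `q₀` are pairwise distinct and not collinear, then `∇U(q₀) = 0` iff
`r₁₂(q₀) = √(−3B₁₂/A₁₂)`, `r₁₃(q₀) = √(−3B₁₃/A₁₃)` and `r₂₃(q₀) = √(−3B₂₃/A₂₃)`. -/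
theorem schwarzschild_three_body_critical_points
    (A12 B12 A13 B13 A23 B23 : ℝ)
    (hA12 : A12 < 0) (hB12 : 0 < B12) (hA13 : A13 < 0) (hB13 : 0 < B13)
    (hA23 : A23 < 0) (hB23 : 0 < B23)
    (q₀ : SchwConf)
    (hq₀ : q₀ 0 ≠ q₀ 1 ∧ q₀ 0 ≠ q₀ 2 ∧ q₀ 1 ≠ q₀ 2)
    (hcol : ¬ Collinear ℝ ({q₀ 0, q₀ 1, q₀ 2} : Set (EuclideanSpace ℝ (Fin 2)))) :
    gradient (schwU3 A12 B12 A13 B13 A23 B23) q₀ = 0 ↔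
      (‖q₀ 0 - q₀ 1‖ = Real.sqrt (-3 * B12 / A12) ∧
       ‖q₀ 0 - q₀ 2‖ = Real.sqrt (-3 * B13 / A13) ∧
       ‖q₀ 1 - q₀ 2‖ = Real.sqrt (-3 * B23 / A23)) := by
  obtain ⟨h01, h02, h12'⟩ := hq₀
  set u12 : E2 := q₀ 0 - q₀ 1 with hu12
  set u13 : E2 := q₀ 0 - q₀ 2 with hu13
  set u23 : E2 := q₀ 1 - q₀ 2 with hu23
  have hu12ne : u12 ≠ 0 := sub_ne_zero.2 h01
  have hu13ne : u13 ≠ 0 := sub_ne_zero.2 h02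
  have hu23ne : u23 ≠ 0 := sub_ne_zero.2 h12'
  have hr12 : 0 < ‖u12‖ := norm_pos_iff.2 hu12ne
  have hr13 : 0 < ‖u13‖ := norm_pos_iff.2 hu13ne
  have hr23 : 0 < ‖u23‖ := norm_pos_iff.2 hu23ne
  set c12 : ℝ := -A12 / ‖u12‖ ^ 3 - 3 * B12 / ‖u12‖ ^ 5 with hc12def
  set c13 : ℝ := -A13 / ‖u13‖ ^ 3 - 3 * B13 / ‖u13‖ ^ 5 with hc13def
  set c23 : ℝ := -A23 / ‖u23‖ ^ 3 - 3 * B23 / ‖u23‖ ^ 5 with hc23def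
  -- total Fréchet derivative
  have h12 := pair_hasFDerivAt A12 B12 0 1 q₀ h01
  have h13 := pair_hasFDerivAt A13 B13 0 2 q₀ h02
  have h23 := pair_hasFDerivAt A23 B23 1 2 q₀ h12'
  have hU : HasFDerivAt (schwU3 A12 B12 A13 B13 A23 B23)
      ((c12 • ((innerSL ℝ u12).comp (Lpair 0 1))) +
       (c13 • ((innerSL ℝ u13).comp (Lpair 0 2))) +
       (c23 • ((innerSL ℝ u23).comp (Lpair 1 2)))) q₀ := by
    unfold schwU3
    exact (h12.add h13).add h23
  -- the gradient vector
  set v : SchwConf := WithLp.toLp 2 ![c12 • u12 + c13 • u13, c23 • u23 - c12 • u12,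
      -(c13 • u13) - c23 • u23] with hv
  have hvD : (InnerProductSpace.toDual ℝ SchwConf) v =
      ((c12 • ((innerSL ℝ u12).comp (Lpair 0 1))) +
       (c13 • ((innerSL ℝ u13).comp (Lpair 0 2))) +
       (c23 • ((innerSL ℝ u23).comp (Lpair 1 2)))) := by
    ext h
    rw [InnerProductSpace.toDual_apply_apply, PiLp.inner_apply, Fin.sum_univ_three]
    show (inner ℝ (c12 • u12 + c13 • u13) (h 0) : ℝ) + inner ℝ (c23 • u23 - c12 • u12) (h 1)
        + inner ℝ (-(c13 • u13) - c23 • u23) (h 2) = _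
    simp only [ContinuousLinearMap.add_apply, ContinuousLinearMap.smul_apply,
      ContinuousLinearMap.comp_apply, Lpair_apply, innerSL_apply_apply, smul_eq_mul]
    simp only [inner_add_left, inner_sub_left, inner_neg_left, real_inner_smul_left,
      inner_sub_right]
    ring
  have hgrad : HasGradientAt (schwU3 A12 B12 A13 B13 A23 B23) v q₀ := by
    rw [hasGradientAt_iff_hasFDerivAt, hvD]; exact hU
  rw [hgrad.gradient]
  -- linear independence of u12, u13 from non-collinearity
  have hind : ∀ a b : ℝ, a • u12 + b • u13 = 0 → a = 0 ∧ b = 0 := by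
    intro a b hab
    have ha : a = 0 := by
      by_contra ha
      apply hcol
      rw [collinear_iff_of_mem (Set.mem_insert _ _)]
      refine ⟨u13, ?_⟩
      intro p hp
      have hu12eq : u12 = (-(b / a)) • u13 := by
        have h1 : a • u12 = -(b • u13) := by
          rw [← add_eq_zero_iff_eq_neg]; exact hab
        have h2 : u12 = a⁻¹ • (a • u12) := by
          rw [smul_smul, inv_mul_cancel₀ ha, one_smul]
        rw [h2, h1, smul_neg, smul_smul]
        rw [← neg_smul]
        ring_nf
      simp only [Set.mem_insert_iff, Set.mem_singleton_iff] at hp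
      rcases hp with rfl | rfl | rfl
      · exact ⟨0, by simp⟩
      · refine ⟨b / a, ?_⟩
        have : q₀ 1 = q₀ 0 - u12 := by rw [hu12]; abel
        rw [this, hu12eq, vadd_eq_add, neg_smul]
        abel
      · refine ⟨-1, ?_⟩
        have : q₀ 2 = q₀ 0 - u13 := by rw [hu13]; abel
        rw [this, vadd_eq_add, neg_smul, one_smul]
        abel
    refine ⟨ha, ?_⟩
    rw [ha, zero_smul, zero_add] at hab
    exact (smul_eq_zero.1 hab).resolve_right hu13ne
  constructor
  · intro h
    have e0 : c12 • u12 + c13 • u13 = 0 := by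
      have := congrFun (congrArg WithLp.ofLp h) 0
      simpa [hv] using this
    obtain ⟨hc12, hc13⟩ := hind _ _ e0
    have e1 : c23 • u23 - c12 • u12 = 0 := by
      have := congrFun (congrArg WithLp.ofLp h) 1
      simpa [hv] using this
    have hc23 : c23 = 0 := by
      rw [hc12, zero_smul, sub_zero] at e1
      exact (smul_eq_zero.1 e1).resolve_right hu23ne
    exact ⟨(crit_dist hA12 hB12 hr12).1 hc12, (crit_dist hA13 hB13 hr13).1 hc13,
      (crit_dist hA23 hB23 hr23).1 hc23⟩
  · rintro ⟨hd12, hd13, hd23⟩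
    have hc12 : c12 = 0 := (crit_dist hA12 hB12 hr12).2 hd12
    have hc13 : c13 = 0 := (crit_dist hA13 hB13 hr13).2 hd13
    have hc23 : c23 = 0 := (crit_dist hA23 hB23 hr23).2 hd23
    ext k : 1
    fin_cases k <;> simp [hv, hc12, hc13, hc23]
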